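/- (Characterization of the counterfactual instance by quantile matching.) Consider a topologically ordered SCM over n real variables in which every slice u ↦ f i v u is strictly monotone increasing, and suppose that for every i : Fin n and every p : Fin n → ℝ the CDF of the conditional distribution ν i p is injective. Let u : Fin n → ℝ, v = solve u, C ⊆ Fin n, c : Fin n → ℝ, and v* = solveC u. Then v* is the unique vector w : Fin n → ℝ such that (a) w i = c i for every i ∈ C, and (b) F_{ν i w}(w i) = F_{ν i v}(v i) for every i ∉ C. Since the conditions (a)–(b) refer only to the conditional distributions ν i p (which are determined by the causal graph and the observational joint distribution), the counterfactual instance is identifiable. -/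
import Mathlib


open MeasureTheory

/-- The cumulative distribution function of a Borel measure on ℝ:
`F_m(x) = m((-∞, x])`. -/
noncomputable def cdfOf (m : Measure ℝ) (x : ℝ) : ℝ := (m (Set.Iic x)).toReal

lemma cdf_map_strictMono {g : ℝ → ℝ} (hg : StrictMono g) (μ : Measure ℝ) (x : ℝ) :
    cdfOf (Measure.map g μ) (g x) = cdfOf μ x := by
  unfold cdfOf
  rw [Measure.map_apply hg.monotone.measurable measurableSet_Iic]
  have : g ⁻¹' Set.Iic (g x) = Set.Iic x := by ext y; simp [hg.le_iff_le]
  rw [this]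

/-- Characterization of the counterfactual instance by quantile matching: in a
topologically ordered SCM with strictly increasing mechanism slices whose conditional
CDFs are injective, the counterfactual instance `v* = solveC u` under `do(C = c)` is the
unique vector `w` with (a) `w i = c i` for `i ∈ C` and (b)
`F_{ν i w}(w i) = F_{ν i v}(v i)` for `i ∉ C`, where `v = solve u` is the factual
instance and `ν i p = Measure.map (f i p) (μ i)`. Since these conditions refer only to
the conditional distributions, the counterfactual instance is identifiable. -/
theorem counterfactual_characterized_by_quantile_matching (n : ℕ)
    (pa : Fin n → Finset (Fin n))
    (hpa : ∀ i : Fin n, ∀ j ∈ pa i, j < i)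
    (f : Fin n → (Fin n → ℝ) → ℝ → ℝ)
    (hloc : ∀ i : Fin n, ∀ v w : Fin n → ℝ, (∀ j ∈ pa i, v j = w j) → f i v = f i w)
    (hmono : ∀ (i : Fin n) (v : Fin n → ℝ), StrictMono (f i v))
    (μ : Fin n → Measure ℝ) [∀ i, IsProbabilityMeasure (μ i)]
    (hinj : ∀ (i : Fin n) (p : Fin n → ℝ),
      Function.Injective (cdfOf (Measure.map (f i p) (μ i))))
    (solve : (Fin n → ℝ) → (Fin n → ℝ))
    (hsolve : ∀ (u : Fin n → ℝ) (i : Fin n), solve u i = f i (solve u) (u i))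
    (C : Set (Fin n)) (c : Fin n → ℝ)
    (solveC : (Fin n → ℝ) → (Fin n → ℝ))
    (hsolveC : ∀ u : Fin n → ℝ,
      (∀ i ∈ C, solveC u i = c i) ∧ ∀ i ∉ C, solveC u i = f i (solveC u) (u i))
    (u : Fin n → ℝ) :
    (∀ i ∈ C, solveC u i = c i)
    ∧ (∀ i ∉ C,
        cdfOf (Measure.map (f i (solveC u)) (μ i)) (solveC u i)
          = cdfOf (Measure.map (f i (solve u)) (μ i)) (solve u i))
    ∧ ∀ w : Fin n → ℝ,
        (∀ i ∈ C, w i = c i) →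
        (∀ i ∉ C,
          cdfOf (Measure.map (f i w) (μ i)) (w i)
            = cdfOf (Measure.map (f i (solve u)) (μ i)) (solve u i)) →
        w = solveC u := by
  refine ⟨(hsolveC u).1, ?_, ?_⟩
  · intro i hi
    rw [(hsolveC u).2 i hi, hsolve u i, cdf_map_strictMono (hmono i _) (μ i),
      cdf_map_strictMono (hmono i _) (μ i)]
  · intro w hwC hwcdf
    have key : ∀ k : ℕ, ∀ i : Fin n, i.val = k → w i = solveC u i := by
      intro k
      induction k using Nat.strong_induction_on with
      | _ k IH =>
      intro i hik
      have ih : ∀ j : Fin n, j < i → w j = solveC u j := fun j hj =>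
        IH j.val (hik ▸ hj) j rfl
      by_cases hi : i ∈ C
      · rw [hwC i hi, (hsolveC u).1 i hi]
      · have hfw : f i w = f i (solveC u) :=
          hloc i w (solveC u) fun j hj => ih j (hpa i j hj)
        have h1 : cdfOf (Measure.map (f i w) (μ i)) (w i)
            = cdfOf (Measure.map (f i w) (μ i)) (f i w (u i)) := by
          rw [hwcdf i hi, hsolve u i, cdf_map_strictMono (hmono i _) (μ i),
            cdf_map_strictMono (hmono i _) (μ i)]
        have := hinj i w h1
        rw [this, (hsolveC u).2 i hi, hfw]
    exact funext fun i => key i.val i rfl
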